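/- Let U be a Hopf *-algebra and Z a unital left U-module *-algebra. A linear functional h on Z is invariant (h(f ▷ z) = ε(f) h(z) for all f ∈ U, z ∈ Z) if and only if ⟨f ▷ y, x⟩ = ⟨y, f* ▷ x⟩ for all x,y ∈ Z and f ∈ U, where ⟨y,x⟩ := h(x* y). -/
import Mathlib


open TensorProduct

theorem exists_fin' {R M N : Type*} [CommSemiring R] [AddCommMonoid M] [AddCommMonoid N]
    [Module R M] [Module R N] (x : M ⊗[R] N) :
    ∃ (n : ℕ) (a : Fin n → M) (b : Fin n → N), x = ∑ i, a i ⊗ₜ[R] b i := by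
  obtain ⟨S, hS⟩ := TensorProduct.exists_finset x
  refine ⟨S.card, fun i => (S.equivFin.symm i).1.1, fun i => (S.equivFin.symm i).1.2, ?_⟩
  rw [hS, ← Finset.sum_attach S (fun p => p.1 ⊗ₜ[R] p.2)]
  exact Fintype.sum_equiv S.equivFin _ _ (fun p => by simp)

set_option synthInstance.maxHeartbeats 1000000 in
/-- For a unital left `U`-module *-algebra `Z` over a Hopf *-algebra `U`,
a linear functional `h` on `Z` is invariant (`h(f ▷ z) = ε(f) h(z)`) if and only if
`⟨f ▷ y, x⟩ = ⟨y, f* ▷ x⟩` for all `x, y ∈ Z` and `f ∈ U`, where `⟨y,x⟩ = h(x* y)`. -/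
theorem statement3 {U Z : Type*} [Ring U] [HopfAlgebra ℂ U]
    [StarRing U] [StarModule ℂ U]
    [Ring Z] [Algebra ℂ Z] [StarRing Z] [StarModule ℂ Z]
    (act : U →ₗ[ℂ] Z →ₗ[ℂ] Z)
    (hact_mul : ∀ (f g : U) (z : Z), act (f * g) z = act f (act g z))
    (hact_one : ∀ z : Z, act 1 z = z)
    (hact_alg : ∀ (f : U) (z w : Z) (n : ℕ) (a b : Fin n → U),
      Coalgebra.comul (R := ℂ) f = ∑ i, a i ⊗ₜ[ℂ] b i →
      act f (z * w) = ∑ i, act (a i) z * act (b i) w)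
    (hact_unit : ∀ f : U, act f (1 : Z) = Coalgebra.counit (R := ℂ) f • (1 : Z))
    (hact_star : ∀ (f : U) (z : Z),
      star (act f z) = act (star (HopfAlgebra.antipode (R := ℂ) f)) (star z))
    (hSstar : ∀ f : U,
      HopfAlgebra.antipode (R := ℂ)
        (star (HopfAlgebra.antipode (R := ℂ) (star f))) = f)
    (hcomul_star : ∀ (f : U) (n : ℕ) (a b : Fin n → U),
      Coalgebra.comul (R := ℂ) f = ∑ i, a i ⊗ₜ[ℂ] b i →
      Coalgebra.comul (R := ℂ) (star f) = ∑ i, star (a i) ⊗ₜ[ℂ] star (b i))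
    (hcounit_star : ∀ f : U,
      Coalgebra.counit (R := ℂ) (star f) = starRingEnd ℂ (Coalgebra.counit (R := ℂ) f))
    (h : Z →ₗ[ℂ] ℂ) :
    (∀ (f : U) (z : Z), h (act f z) = Coalgebra.counit (R := ℂ) f * h z) ↔
      (∀ (f : U) (x y : Z), h (star x * act f y) = h (star (act (star f) x) * y)) := by
  constructor
  · intro hinv
    -- Key lemma: h (act g z * w) = h (z * act (S g) w)
    have key : ∀ (g : U) (z w : Z),
        h (act g z * w) = h (z * act (HopfAlgebra.antipode (R := ℂ) g) w) := by
      intro g z w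
      obtain ⟨n, a, b, hrep⟩ := exists_fin' (Coalgebra.comul (R := ℂ) g)
      -- g as counit-weighted sums
      have h1 : ∑ i, Coalgebra.counit (R := ℂ) (b i) • a i = g := by
        have hh := Coalgebra.lTensor_counit_comul (R := ℂ) g
        rw [hrep, map_sum] at hh
        simp only [LinearMap.lTensor_tmul] at hh
        have h2 := congrArg (TensorProduct.rid ℂ U) hh
        simpa [map_sum] using h2
      have h2 : ∑ i, Coalgebra.counit (R := ℂ) (a i) • b i = g := by
        have hh := Coalgebra.rTensor_counit_comul (R := ℂ) g
        rw [hrep, map_sum] at hh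
        simp only [LinearMap.rTensor_tmul] at hh
        have h2 := congrArg (TensorProduct.lid ℂ U) hh
        simpa [map_sum] using h2
      -- the evaluation functional
      set Θ : U ⊗[ℂ] (U ⊗[ℂ] U) →ₗ[ℂ] ℂ :=
        h ∘ₗ LinearMap.mul' ℂ Z ∘ₗ TensorProduct.map (act.flip z)
          (TensorProduct.lift act ∘ₗ
            LinearMap.lTensor U ((act.flip w) ∘ₗ HopfAlgebra.antipode (R := ℂ))) with hΘdef
      have hΘ : ∀ (u v t : U), Θ (u ⊗ₜ[ℂ] (v ⊗ₜ[ℂ] t)) =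
          h (act u z * act v (act (HopfAlgebra.antipode (R := ℂ) t) w)) := by
        intro u v t
        simp [hΘdef, LinearMap.mul'_apply]
      have coas := congrArg Θ (Coalgebra.coassoc_apply (R := ℂ) g)
      rw [hrep] at coas
      simp only [map_sum, LinearMap.rTensor_tmul, LinearMap.lTensor_tmul] at coas
      have hL : ∀ i, Θ ((TensorProduct.assoc ℂ U U U)
            ((Coalgebra.comul (R := ℂ) (a i)) ⊗ₜ[ℂ] b i)) =
          Coalgebra.counit (R := ℂ) (a i) *
            h (z * act (HopfAlgebra.antipode (R := ℂ) (b i)) w) := by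
        intro i
        obtain ⟨m, c, d, hrep2⟩ := exists_fin' (Coalgebra.comul (R := ℂ) (a i))
        rw [hrep2, TensorProduct.sum_tmul, map_sum, map_sum]
        simp only [TensorProduct.assoc_tmul, hΘ]
        rw [← map_sum h,
          ← hact_alg (a i) z (act (HopfAlgebra.antipode (R := ℂ) (b i)) w) m c d hrep2,
          hinv]
      have hR : ∀ i, Θ ((a i) ⊗ₜ[ℂ] Coalgebra.comul (R := ℂ) (b i)) =
          Coalgebra.counit (R := ℂ) (b i) * h (act (a i) z * w) := by
        intro i
        obtain ⟨m, c, d, hrep2⟩ := exists_fin' (Coalgebra.comul (R := ℂ) (b i))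
        have hant := HopfAlgebra.mul_antipode_lTensor_comul_apply (R := ℂ) (b i)
        rw [hrep2, map_sum, map_sum] at hant
        simp only [LinearMap.lTensor_tmul, LinearMap.mul'_apply] at hant
        rw [hrep2, TensorProduct.tmul_sum, map_sum]
        simp only [hΘ]
        have hmul : ∀ j, act (c j) (act (HopfAlgebra.antipode (R := ℂ) (d j)) w) =
            act (c j * HopfAlgebra.antipode (R := ℂ) (d j)) w :=
          fun j => (hact_mul _ _ _).symm
        simp only [hmul]
        have hsum : act ((algebraMap ℂ U) (Coalgebra.counit (R := ℂ) (b i))) w =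
            ∑ j, act (c j * HopfAlgebra.antipode (R := ℂ) (d j)) w := by
          rw [← hant, map_sum, LinearMap.sum_apply]
        rw [← map_sum h, ← Finset.mul_sum, ← hsum, Algebra.algebraMap_eq_smul_one]
        simp [hact_one, mul_smul_comm, smul_eq_mul]
      simp only [hL, hR] at coas
      calc h (act g z * w)
          = ∑ i, Coalgebra.counit (R := ℂ) (b i) * h (act (a i) z * w) := by
            conv_lhs => rw [← h1]
            rw [map_sum, LinearMap.sum_apply, Finset.sum_mul, map_sum]
            simp [smul_mul_assoc, smul_eq_mul]
        _ = ∑ i, Coalgebra.counit (R := ℂ) (a i) *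
              h (z * act (HopfAlgebra.antipode (R := ℂ) (b i)) w) := coas.symm
        _ = h (z * act (HopfAlgebra.antipode (R := ℂ) g) w) := by
            conv_rhs => rw [← h2]
            rw [map_sum, map_sum, LinearMap.sum_apply, Finset.mul_sum, map_sum]
            simp [mul_smul_comm, smul_eq_mul]
    intro f x y
    have hk := key (star (HopfAlgebra.antipode (R := ℂ) (star f))) (star x) y
    rw [hSstar f] at hk
    rw [← hk, ← hact_star]
  · intro hadj f z
    have hz := hadj f 1 z
    rw [star_one, one_mul] at hz
    rw [hz, hact_unit, hcounit_star]
    simp [star_smul, smul_mul_assoc, smul_eq_mul]
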